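/- Let (a_n)_{n≥1} be a sequence of real numbers and define functionals T_n on c_0 (the space of real sequences converging to 0 with the supremum norm) by T_n x = a_n x_n. Then the R-bound of the family {T_n : n ≥ 1} equals the ℓ²-norm of (a_n): ℛ({T_n : n ≥ 1}) = (∑_{n≥1} a_n²)^{1/2} (both sides possibly infinite). -/

import Mathlib

open MeasureTheory ProbabilityTheory Filter ENNReal

noncomputable section

/-- `ξ` is an independent family of Rademacher random variables on `(Ω, μ)`,
i.e. `P(ξ i = 1) = P(ξ i = -1) = 1/2`. -/
def IsRademacherFam {ι Ω : Type*} [MeasurableSpace Ω] (μ : Measure Ω) (ξ : ι → Ω → ℝ) : Prop :=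
  IsProbabilityMeasure μ ∧ (∀ i, Measurable (ξ i)) ∧
    iIndepFun ξ μ ∧
    ∀ i, μ.map (ξ i) =
      (2 : ℝ≥0∞)⁻¹ • Measure.dirac (1 : ℝ) + (2 : ℝ≥0∞)⁻¹ • Measure.dirac (-1 : ℝ)

/-- `ξ` is an independent family of standard Gaussian random variables on `(Ω, μ)`. -/
def IsGaussianFam {ι Ω : Type*} [MeasurableSpace Ω] (μ : Measure Ω) (ξ : ι → Ω → ℝ) : Prop :=
  IsProbabilityMeasure μ ∧ (∀ i, Measurable (ξ i)) ∧
    iIndepFun ξ μ ∧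
    ∀ i, μ.map (ξ i) = gaussianReal 0 1

/-- The randomized boundedness condition for a family of operators `𝒯 ⊆ L(X,Y)`, with
constant `C`, relative to the random sequence `ξ`:
`(E ‖∑ ξ_n T_n x_n‖²)^{1/2} ≤ C (E ‖∑ ξ_n x_n‖²)^{1/2}` for all finite choices
`T_n ∈ 𝒯` (repetitions allowed) and `x_n ∈ X`.  For `ξ` a Rademacher sequence this is
`R`-boundedness with constant `C`; for `ξ` a Gaussian sequence it is `γ`-boundedness. -/
def BoundedWith {X Y Ω : Type*} [NormedAddCommGroup X] [NormedSpace ℝ X]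
    [NormedAddCommGroup Y] [NormedSpace ℝ Y] [MeasurableSpace Ω]
    (μ : Measure Ω) (ξ : ℕ → Ω → ℝ) (𝒯 : Set (X →L[ℝ] Y)) (C : ℝ) : Prop :=
  ∀ (N : ℕ) (T : Fin N → X →L[ℝ] Y) (x : Fin N → X), (∀ n, T n ∈ 𝒯) →
    Real.sqrt (∫ ω, ‖∑ n : Fin N, ξ n.1 ω • T n (x n)‖ ^ 2 ∂μ) ≤
      C * Real.sqrt (∫ ω, ‖∑ n : Fin N, ξ n.1 ω • x n‖ ^ 2 ∂μ)

/-- The family `𝒯` is bounded (R- or γ-, according to `ξ`). -/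
def IsBoundedFam {X Y Ω : Type*} [NormedAddCommGroup X] [NormedSpace ℝ X]
    [NormedAddCommGroup Y] [NormedSpace ℝ Y] [MeasurableSpace Ω]
    (μ : Measure Ω) (ξ : ℕ → Ω → ℝ) (𝒯 : Set (X →L[ℝ] Y)) : Prop :=
  ∃ C : ℝ, 0 ≤ C ∧ BoundedWith μ ξ 𝒯 C

/-- The bound (R-bound or γ-bound according to `ξ`) of the family `𝒯`, defined as the least
admissible constant. -/
def boundConst {X Y Ω : Type*} [NormedAddCommGroup X] [NormedSpace ℝ X]
    [NormedAddCommGroup Y] [NormedSpace ℝ Y] [MeasurableSpace Ω]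
    (μ : Measure Ω) (ξ : ℕ → Ω → ℝ) (𝒯 : Set (X →L[ℝ] Y)) : ℝ :=
  sInf {C : ℝ | 0 ≤ C ∧ BoundedWith μ ξ 𝒯 C}

/-- `X` has cotype `q` (with respect to the random sequence `ξ`):
`(∑ ‖x_n‖^q)^{1/q} ≤ C (E‖∑ ξ_n x_n‖²)^{1/2}`. -/
def HasCotype (X : Type*) [NormedAddCommGroup X] [NormedSpace ℝ X] {Ω : Type*}
    [MeasurableSpace Ω] (μ : Measure Ω) (ξ : ℕ → Ω → ℝ) (q : ℝ) : Prop :=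
  ∃ C : ℝ, 0 ≤ C ∧ ∀ (N : ℕ) (x : Fin N → X),
    (∑ n, ‖x n‖ ^ q) ^ (1 / q) ≤ C * Real.sqrt (∫ ω, ‖∑ n : Fin N, ξ n.1 ω • x n‖ ^ 2 ∂μ)

/-- `X` has finite cotype: it has cotype `q` for some `q ∈ [2, ∞)`. -/
def HasFiniteCotype (X : Type*) [NormedAddCommGroup X] [NormedSpace ℝ X] {Ω : Type*}
    [MeasurableSpace Ω] (μ : Measure Ω) (ξ : ℕ → Ω → ℝ) : Prop :=
  ∃ q : ℝ, 2 ≤ q ∧ HasCotype X μ ξ q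


/-- The cotype-2 condition for an operator `A : X → Y`, with constant `C`, relative to the
random sequence `ξ`: `(∑ ‖A x_i‖²)^{1/2} ≤ C (E‖∑ ξ_i x_i‖²)^{1/2}`.  For a Rademacher
sequence `ξ` this is the Rademacher cotype-2 condition, for a Gaussian sequence the
Gaussian cotype-2 condition. -/
def Cotype2With {X Y Ω : Type*} [NormedAddCommGroup X] [NormedSpace ℝ X]
    [NormedAddCommGroup Y] [NormedSpace ℝ Y] [MeasurableSpace Ω]
    (μ : Measure Ω) (ξ : ℕ → Ω → ℝ) (A : X →L[ℝ] Y) (C : ℝ) : Prop :=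
  ∀ (k : ℕ) (x : Fin k → X),
    Real.sqrt (∑ i, ‖A (x i)‖ ^ 2) ≤
      C * Real.sqrt (∫ ω, ‖∑ i : Fin k, ξ i.1 ω • x i‖ ^ 2 ∂μ)

/-- The cotype-2 constant of an operator (Rademacher or Gaussian according to `ξ`). -/
def cotype2Const {X Y Ω : Type*} [NormedAddCommGroup X] [NormedSpace ℝ X]
    [NormedAddCommGroup Y] [NormedSpace ℝ Y] [MeasurableSpace Ω]
    (μ : Measure Ω) (ξ : ℕ → Ω → ℝ) (A : X →L[ℝ] Y) : ℝ :=
  sInf {C : ℝ | 0 ≤ C ∧ Cotype2With μ ξ A C}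

/-- The `ℓ²`-boundedness condition with constant `C` for a family of functionals on
`ℓ^∞_M = (Fin M → ℝ)` (with the sup norm):
`(∑ |S_i x_i|²)^{1/2} ≤ C · max_m (∑ |x_i(m)|²)^{1/2}`. -/
def Ell2BoundedWith (M : ℕ) (𝒯 : Set ((Fin M → ℝ) →L[ℝ] ℝ)) (C : ℝ) : Prop :=
  ∀ (k : ℕ) (S : Fin k → (Fin M → ℝ) →L[ℝ] ℝ) (x : Fin k → Fin M → ℝ), (∀ i, S i ∈ 𝒯) →
    Real.sqrt (∑ i, S i (x i) ^ 2) ≤ C * Real.sqrt (⨆ m : Fin M, ∑ i, x i m ^ 2)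

/-- The `ℓ²`-bound of a family of functionals on `ℓ^∞_M`. -/
def ell2BoundConst (M : ℕ) (𝒯 : Set ((Fin M → ℝ) →L[ℝ] ℝ)) : ℝ :=
  sInf {C : ℝ | 0 ≤ C ∧ Ell2BoundedWith M 𝒯 C}

/-- The 2-summing condition with constant `C` for an operator `A : ℓ^∞_M → Y`; recall that
for the domain `ℓ^∞_M` the supremum over the dual unit ball equals the maximum over the
coordinates, i.e. `(∑ ‖A x_i‖²)^{1/2} ≤ C · max_m (∑ |x_i(m)|²)^{1/2}`. -/
def Pi2With (M : ℕ) {Y : Type*} [NormedAddCommGroup Y] [NormedSpace ℝ Y]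
    (A : (Fin M → ℝ) →L[ℝ] Y) (C : ℝ) : Prop :=
  ∀ (k : ℕ) (x : Fin k → Fin M → ℝ),
    Real.sqrt (∑ i, ‖A (x i)‖ ^ 2) ≤ C * Real.sqrt (⨆ m : Fin M, ∑ i, x i m ^ 2)

/-- The 2-summing norm `π₂(A)` of an operator `A : ℓ^∞_M → Y`. -/
def pi2Const (M : ℕ) {Y : Type*} [NormedAddCommGroup Y] [NormedSpace ℝ Y]
    (A : (Fin M → ℝ) →L[ℝ] Y) : ℝ :=
  sInf {C : ℝ | 0 ≤ C ∧ Pi2With M A C}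

/-- `X` has (Rademacher) type `p` with respect to the random sequence `ξ`:
`(E‖∑ ξ_n x_n‖^p)^{1/p} ≤ τ (∑ ‖x_n‖^p)^{1/p}`. -/
def HasTypeP (X : Type*) [NormedAddCommGroup X] [NormedSpace ℝ X] {Ω : Type*}
    [MeasurableSpace Ω] (μ : Measure Ω) (ξ : ℕ → Ω → ℝ) (p : ℝ) : Prop :=
  ∃ τ : ℝ, 0 ≤ τ ∧ ∀ (N : ℕ) (x : Fin N → X),
    (∫ ω, ‖∑ n : Fin N, ξ n.1 ω • x n‖ ^ p ∂μ) ^ (1 / p) ≤ τ * (∑ n, ‖x n‖ ^ p) ^ (1 / p)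

/-- `X` has nontrivial type: type `p` for some `p ∈ (1, 2]`. -/
def HasNontrivialType (X : Type*) [NormedAddCommGroup X] [NormedSpace ℝ X] {Ω : Type*}
    [MeasurableSpace Ω] (μ : Measure Ω) (ξ : ℕ → Ω → ℝ) : Prop :=
  ∃ p : ℝ, 1 < p ∧ p ≤ 2 ∧ HasTypeP X μ ξ p

/-- The Banach space adjoint `T* : Y* → X*` of `T : X → Y`, given by `T* y* = y* ∘ T`. -/
def banachAdjoint {X Y : Type*} [NormedAddCommGroup X] [NormedSpace ℝ X]
    [NormedAddCommGroup Y] [NormedSpace ℝ Y] (T : X →L[ℝ] Y) :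
    (Y →L[ℝ] ℝ) →L[ℝ] (X →L[ℝ] ℝ) :=
  (ContinuousLinearMap.compSL X Y ℝ (RingHom.id ℝ) (RingHom.id ℝ)).flip T


section RadHelpers
variable {Ω : Type*} [MeasurableSpace Ω] {μ : Measure Ω} {r : ℕ → Ω → ℝ}

lemma rad_abs_one (hr : IsRademacherFam μ r) (n : ℕ) : ∀ᵐ ω ∂μ, |r n ω| = 1 := by
  obtain ⟨hP, hm, hi, hd⟩ := hr
  have hs : MeasurableSet ({1, -1} : Set ℝ) :=
    (measurableSet_singleton 1).union (measurableSet_singleton (-1))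
  have hmap : μ.map (r n) {1, -1} = 1 := by
    rw [hd n]
    simp [Measure.dirac_apply' _ hs, Set.indicator_of_mem, ENNReal.inv_two_add_inv_two]
  have hpre : μ ((r n) ⁻¹' {1, -1}) = 1 := by
    rw [← Measure.map_apply (hm n) hs]; exact hmap
  have hcompl : μ ((r n) ⁻¹' {1, -1})ᶜ = 0 := by
    rw [measure_compl (hs.preimage (hm n)) (measure_ne_top μ _), hpre, measure_univ, tsub_self]
  filter_upwards [measure_eq_zero_iff_ae_notMem.mp hcompl] with ω hω
  simp only [Set.mem_compl_iff, Set.mem_preimage, not_not] at hω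
  rcases hω with h | h <;> simp_all

lemma rad_integral (hr : IsRademacherFam μ r) (n : ℕ) (f : ℝ → ℝ) :
    ∫ ω, f (r n ω) ∂μ = (f 1 + f (-1)) / 2 := by
  obtain ⟨hP, hm, hi, hd⟩ := hr
  have hd1 : Integrable f ((2 : ℝ≥0∞)⁻¹ • Measure.dirac (1 : ℝ)) :=
    ((integrable_const (f 1)).congr (ae_eq_dirac f).symm).smul_measure (by simp)
  have hd2 : Integrable f ((2 : ℝ≥0∞)⁻¹ • Measure.dirac (-1 : ℝ)) :=
    ((integrable_const (f (-1))).congr (ae_eq_dirac f).symm).smul_measure (by simp)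
  have hae : AEStronglyMeasurable f (μ.map (r n)) := by
    rw [hd n]; exact (hd1.add_measure hd2).aestronglyMeasurable
  rw [← integral_map (hm n).aemeasurable hae, hd n, integral_add_measure hd1 hd2,
    integral_smul_measure, integral_smul_measure, integral_dirac, integral_dirac]
  simp [ENNReal.toReal_inv]
  ring

lemma rad_integrable_mul (hr : IsRademacherFam μ r) (n m : ℕ) :
    Integrable (fun ω => r n ω * r m ω) μ := by
  have : IsProbabilityMeasure μ := hr.1
  refine ⟨((hr.2.1 n).mul (hr.2.1 m)).aestronglyMeasurable,
    HasFiniteIntegral.of_bounded (C := 1) ?_⟩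
  filter_upwards [rad_abs_one hr n, rad_abs_one hr m] with ω h1 h2
  simp [Real.norm_eq_abs, abs_mul, h1, h2]

lemma rad_sum_sq (hr : IsRademacherFam μ r) {N : ℕ} (c : Fin N → ℝ) :
    ∫ ω, (∑ n : Fin N, c n * r n.1 ω) ^ 2 ∂μ = ∑ n, c n ^ 2 := by
  have key : ∀ n m : Fin N, ∫ ω, r n.1 ω * r m.1 ω ∂μ = if n = m then 1 else 0 := by
    intro n m
    by_cases h : n = m
    · subst h
      simp only [if_pos rfl]
      have := rad_integral hr n.1 (fun x => x * x)
      simpa using this.trans (by norm_num)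
    · have hnm : n.1 ≠ m.1 := fun hv => h (Fin.val_injective hv)
      have hind : IndepFun (r n.1) (r m.1) μ := hr.2.2.1.indepFun hnm
      rw [if_neg h]
      have hmul := hind.integral_mul_eq_mul_integral (hr.2.1 n.1).aestronglyMeasurable
        (hr.2.1 m.1).aestronglyMeasurable
      have heq : ∫ ω, r n.1 ω * r m.1 ω ∂μ = integral μ (r n.1 * r m.1) := by
        congr 1
      rw [heq, hmul]
      have h0 : ∀ k, ∫ ω, r k ω ∂μ = 0 := by
        intro k
        have := rad_integral hr k (fun x => x)
        simpa using this.trans (by norm_num)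
      rw [h0, h0, mul_zero]
  have expand : ∀ ω, (∑ n : Fin N, c n * r n.1 ω) ^ 2 =
      ∑ n : Fin N, ∑ m : Fin N, (c n * c m) * (r n.1 ω * r m.1 ω) := by
    intro ω
    rw [sq, Finset.sum_mul_sum]
    congr 1; ext n; congr 1; ext m; ring
  simp_rw [expand]
  rw [integral_finset_sum _ fun n _ => integrable_finset_sum _ fun m _ =>
    ((rad_integrable_mul hr n.1 m.1).const_mul _)]
  have : ∀ n : Fin N, ∫ ω, ∑ m : Fin N, (c n * c m) * (r n.1 ω * r m.1 ω) ∂μ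
      = c n ^ 2 := by
    intro n
    rw [integral_finset_sum _ fun m _ => ((rad_integrable_mul hr n.1 m.1).const_mul _)]
    have : ∀ m : Fin N, ∫ ω, (c n * c m) * (r n.1 ω * r m.1 ω) ∂μ =
        if n = m then c n ^ 2 else 0 := by
      intro m
      rw [MeasureTheory.integral_const_mul, key]
      by_cases h : n = m
      · subst h; simp [sq]
      · simp [h]
    simp_rw [this]
    simp
  simp_rw [this]

end RadHelpers

open ZeroAtInfty in
def c0single (n : ℕ) : C₀(ℕ, ℝ) :=
  ⟨⟨Pi.single n 1, continuous_of_discreteTopology⟩, by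
    rw [cocompact_eq_cofinite]
    refine tendsto_const_nhds.congr' ?_
    filter_upwards [(Set.finite_singleton n).eventually_cofinite_notMem] with m hm
    exact (Pi.single_eq_of_ne (M := fun _ : ℕ => ℝ) (by simpa using hm) 1).symm⟩

open ZeroAtInfty in
@[simp] lemma c0single_apply (n m : ℕ) : c0single n m = if m = n then 1 else 0 := by
  simp [c0single, Pi.single_apply]

open ZeroAtInfty in
lemma c0_sum_apply {ι : Type*} (s : Finset ι) (f : ι → C₀(ℕ, ℝ)) (m : ℕ) :
    (∑ i ∈ s, f i) m = ∑ i ∈ s, f i m := by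
  classical
  induction s using Finset.cons_induction with
  | empty => simp
  | cons i s hi ih =>
    rw [Finset.sum_cons, Finset.sum_cons, ZeroAtInftyContinuousMap.add_apply, ih]

open ZeroAtInfty in
lemma c0_apply_le_norm (f : C₀(ℕ, ℝ)) (m : ℕ) : |f m| ≤ ‖f‖ := by
  rw [← ZeroAtInftyContinuousMap.norm_toBCF_eq_norm]
  exact f.toBCF.norm_coe_le_norm m

open ZeroAtInfty in
lemma c0_norm_le (f : C₀(ℕ, ℝ)) {c : ℝ} (hc : 0 ≤ c) (h : ∀ m, |f m| ≤ c) : ‖f‖ ≤ c := by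
  rw [← ZeroAtInftyContinuousMap.norm_toBCF_eq_norm]
  exact (BoundedContinuousFunction.norm_le hc).mpr h


open ZeroAtInfty in
/-- **Proposition 3.1.**  Let `(aₙ)` be scalars and `Tₙ ∈ (c₀)*` be given by `Tₙ x = aₙ xₙ`.
Then `ℛ({Tₙ}) = ‖a‖_{ℓ²}` (both sides possibly infinite): for every `C ≥ 0`, the family
is `R`-bounded with constant `C` if and only if `∑ aₙ² ≤ C²`. -/
theorem rBound_diagonal_c0_eq_l2Norm
    {Ω : Type*} [MeasurableSpace Ω] (μ : Measure Ω) (r : ℕ → Ω → ℝ)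
    (hr : IsRademacherFam μ r) (a : ℕ → ℝ)
    (T : ℕ → C₀(ℕ, ℝ) →L[ℝ] ℝ) (hT : ∀ (n : ℕ) (x : C₀(ℕ, ℝ)), T n x = a n * x n)
    (C : ℝ) (hC : 0 ≤ C) :
    BoundedWith μ r (Set.range T) C ↔
      ∑' n, ENNReal.ofReal (a n ^ 2) ≤ ENNReal.ofReal (C ^ 2) := by
  classical
  have hP : IsProbabilityMeasure μ := hr.1
  have hm := hr.2.1
  constructor
  · intro hB
    rw [ENNReal.tsum_eq_iSup_sum]
    refine iSup_le fun s => ?_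
    obtain ⟨N, hsN⟩ : ∃ N, s ⊆ Finset.range N :=
      ⟨s.sup id + 1, fun i hi =>
        Finset.mem_range.mpr (Nat.lt_succ_of_le (Finset.le_sup (f := id) hi))⟩
    have key : ∑ i ∈ Finset.range N, a i ^ 2 ≤ C ^ 2 := by
      have hBN := hB N (fun n => T n.1) (fun n => c0single n.1) (fun n => ⟨n.1, rfl⟩)
      have hL : ∫ ω, ‖∑ n : Fin N, r n.1 ω • (T n.1) (c0single n.1)‖ ^ 2 ∂μ
          = ∑ n : Fin N, a n.1 ^ 2 := by
        have hTa : ∀ n : Fin N, T n.1 (c0single n.1) = a n.1 := by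
          intro n; rw [hT]; simp
        have h2 : ∀ ω, ‖∑ n : Fin N, r n.1 ω • (T n.1) (c0single n.1)‖ ^ 2
            = (∑ n : Fin N, a n.1 * r n.1 ω) ^ 2 := by
          intro ω; rw [Real.norm_eq_abs, sq_abs]
          exact congrArg (· ^ 2) (Finset.sum_congr rfl fun n _ => by
            rw [hTa n, smul_eq_mul, mul_comm])
        simp_rw [h2]
        exact rad_sum_sq hr _
      have hR : ∫ ω, ‖∑ n : Fin N, r n.1 ω • c0single n.1‖ ^ 2 ∂μ ≤ 1 := by
        have hb : ∀ᵐ ω ∂μ, ‖∑ n : Fin N, r n.1 ω • c0single n.1‖ ^ 2 ≤ 1 := by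
          filter_upwards [ae_all_iff.mpr fun n : Fin N => rad_abs_one hr n.1] with ω hω
          have hn1 : ‖∑ n : Fin N, r n.1 ω • c0single n.1‖ ≤ 1 := by
            refine c0_norm_le _ zero_le_one fun m => ?_
            rw [c0_sum_apply]
            by_cases hmN : m < N
            · have hv : ∀ n : Fin N, (r n.1 ω • c0single n.1) m
                  = if n = ⟨m, hmN⟩ then r m ω else 0 := by
                intro n
                rw [ZeroAtInftyContinuousMap.smul_apply, c0single_apply, smul_eq_mul]
                by_cases h : n = (⟨m, hmN⟩ : Fin N)
                · subst h; simp
                · have hne : ¬ m = n.1 := fun hh => h (Fin.ext hh.symm)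
                  simp [h, hne]
              rw [Finset.sum_congr rfl fun n _ => hv n, Finset.sum_ite_eq' Finset.univ]
              simp only [Finset.mem_univ, if_pos]
              exact le_of_eq (hω ⟨m, hmN⟩)
            · have hv : ∀ n : Fin N, (r n.1 ω • c0single n.1) m = 0 := by
                intro n
                rw [ZeroAtInftyContinuousMap.smul_apply, c0single_apply, smul_eq_mul]
                have hne : ¬ m = n.1 := fun hh => hmN (hh ▸ n.2)
                simp [hne]
              rw [Finset.sum_congr rfl fun n _ => hv n, Finset.sum_const_zero]
              simp
          calc ‖∑ n : Fin N, r n.1 ω • c0single n.1‖ ^ 2 ≤ 1 ^ 2 :=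
                pow_le_pow_left₀ (norm_nonneg _) hn1 2
            _ = 1 := one_pow 2
        calc ∫ ω, ‖∑ n : Fin N, r n.1 ω • c0single n.1‖ ^ 2 ∂μ
            ≤ ∫ _, (1 : ℝ) ∂μ := integral_mono_of_nonneg
              (Eventually.of_forall fun ω => by positivity) (integrable_const 1) hb
          _ = 1 := by simp
      have hs1 : Real.sqrt (∑ n : Fin N, a n.1 ^ 2) ≤ C := by
        rw [← hL]
        refine le_trans hBN ?_
        calc C * Real.sqrt (∫ ω, ‖∑ n : Fin N, r n.1 ω • c0single n.1‖ ^ 2 ∂μ)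
            ≤ C * Real.sqrt 1 :=
              mul_le_mul_of_nonneg_left (Real.sqrt_le_sqrt hR) hC
          _ = C := by rw [Real.sqrt_one, mul_one]
      have hsq : ∑ n : Fin N, a n.1 ^ 2 ≤ C ^ 2 := by
        have h0 : (0:ℝ) ≤ ∑ n : Fin N, a n.1 ^ 2 := by positivity
        calc ∑ n : Fin N, a n.1 ^ 2 = Real.sqrt (∑ n : Fin N, a n.1 ^ 2) ^ 2 :=
              (Real.sq_sqrt h0).symm
          _ ≤ C ^ 2 := pow_le_pow_left₀ (Real.sqrt_nonneg _) hs1 2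
      rwa [Fin.sum_univ_eq_sum_range (fun i => a i ^ 2) N] at hsq
    calc ∑ i ∈ s, ENNReal.ofReal (a i ^ 2)
        ≤ ∑ i ∈ Finset.range N, ENNReal.ofReal (a i ^ 2) :=
          Finset.sum_le_sum_of_subset hsN
      _ = ENNReal.ofReal (∑ i ∈ Finset.range N, a i ^ 2) :=
          (ENNReal.ofReal_sum_of_nonneg fun i _ => sq_nonneg _).symm
      _ ≤ ENNReal.ofReal (C ^ 2) := ENNReal.ofReal_le_ofReal key
  · intro hsum N T' x hmem
    choose g hg using hmem
    set I := ∫ ω, ‖∑ n : Fin N, r n.1 ω • x n‖ ^ 2 ∂μ with hIdef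
    have hInn : 0 ≤ I := integral_nonneg fun ω => by positivity
    have hmeas : AEStronglyMeasurable (fun ω => ‖∑ n : Fin N, r n.1 ω • x n‖ ^ 2) μ := by
      have h1 : AEStronglyMeasurable (fun ω => ∑ n : Fin N, r n.1 ω • x n) μ :=
        Finset.aestronglyMeasurable_fun_sum _ fun (n : Fin N) _ =>
          ((hm n.1).aestronglyMeasurable).smul_const _
      exact h1.norm.pow 2
    have hint : Integrable (fun ω => ‖∑ n : Fin N, r n.1 ω • x n‖ ^ 2) μ := by
      refine ⟨hmeas, HasFiniteIntegral.of_bounded (C := (∑ n : Fin N, ‖x n‖) ^ 2) ?_⟩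
      filter_upwards [ae_all_iff.mpr fun n : Fin N => rad_abs_one hr n.1] with ω hω
      have hn : ‖∑ n : Fin N, r n.1 ω • x n‖ ≤ ∑ n : Fin N, ‖x n‖ := by
        refine (norm_sum_le _ _).trans (Finset.sum_le_sum fun n _ => ?_)
        have hns : ‖r n.1 ω • x n‖ = |r n.1 ω| * ‖x n‖ :=
          (norm_smul (r n.1 ω) (x n)).trans (by rw [Real.norm_eq_abs])
        rw [hns, hω n, one_mul]
      rw [Real.norm_eq_abs, abs_of_nonneg (by positivity)]
      exact pow_le_pow_left₀ (norm_nonneg _) hn 2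
    have hcoord : ∀ m : ℕ, ∑ n : Fin N, x n m ^ 2 ≤ I := by
      intro m
      have hrs := rad_sum_sq hr (c := fun n : Fin N => x n m)
      rw [← hrs]
      refine integral_mono_of_nonneg (Eventually.of_forall fun ω => by positivity) hint
        (Eventually.of_forall fun ω => ?_)
      show (∑ n : Fin N, x n m * r n.1 ω) ^ 2 ≤ ‖∑ n : Fin N, r n.1 ω • x n‖ ^ 2
      have hpt : (∑ n : Fin N, x n m * r n.1 ω) = (∑ n : Fin N, r n.1 ω • x n) m := by
        rw [c0_sum_apply]
        exact Finset.sum_congr rfl fun n _ => by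
          rw [ZeroAtInftyContinuousMap.smul_apply, smul_eq_mul, mul_comm]
      rw [hpt]
      calc ((∑ n : Fin N, r n.1 ω • x n) m) ^ 2
          = |(∑ n : Fin N, r n.1 ω • x n) m| ^ 2 := (sq_abs _).symm
        _ ≤ ‖∑ n : Fin N, r n.1 ω • x n‖ ^ 2 :=
            pow_le_pow_left₀ (abs_nonneg _) (c0_apply_le_norm _ m) 2
    have himg : ∑ m ∈ Finset.image g Finset.univ, a m ^ 2 ≤ C ^ 2 := by
      have h1 : ENNReal.ofReal (∑ m ∈ Finset.image g Finset.univ, a m ^ 2)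
          ≤ ENNReal.ofReal (C ^ 2) := by
        rw [ENNReal.ofReal_sum_of_nonneg fun i _ => sq_nonneg _]
        exact le_trans (ENNReal.sum_le_tsum _) hsum
      exact (ENNReal.ofReal_le_ofReal_iff (by positivity)).mp h1
    have hmain : ∑ n : Fin N, (T' n (x n)) ^ 2 ≤ C ^ 2 * I := by
      rw [← Finset.sum_fiberwise_of_maps_to (g := g)
        (fun n _ => Finset.mem_image_of_mem g (Finset.mem_univ n)) (fun n => (T' n (x n)) ^ 2)]
      calc ∑ m ∈ Finset.image g Finset.univ, ∑ n ∈ Finset.univ.filter (g · = m),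
            (T' n (x n)) ^ 2
          ≤ ∑ m ∈ Finset.image g Finset.univ, a m ^ 2 * I := by
            refine Finset.sum_le_sum fun m hmem' => ?_
            have hterm : ∀ n ∈ Finset.univ.filter (g · = m),
                (T' n (x n)) ^ 2 = a m ^ 2 * x n m ^ 2 := by
              intro n hn
              have hgn : g n = m := (Finset.mem_filter.mp hn).2
              rw [← hg n, hT, hgn, mul_pow]
            rw [Finset.sum_congr rfl hterm, ← Finset.mul_sum]
            refine mul_le_mul_of_nonneg_left ?_ (sq_nonneg _)
            exact le_trans (Finset.sum_le_sum_of_subset_of_nonneg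
              (Finset.filter_subset _ _) fun i _ _ => sq_nonneg _) (hcoord m)
        _ = (∑ m ∈ Finset.image g Finset.univ, a m ^ 2) * I := (Finset.sum_mul _ _ _).symm
        _ ≤ C ^ 2 * I := mul_le_mul_of_nonneg_right himg hInn
    have hLeq : ∫ ω, ‖∑ n : Fin N, r n.1 ω • T' n (x n)‖ ^ 2 ∂μ
        = ∑ n : Fin N, (T' n (x n)) ^ 2 := by
      have h2 : ∀ ω, ‖∑ n : Fin N, r n.1 ω • T' n (x n)‖ ^ 2
          = (∑ n : Fin N, T' n (x n) * r n.1 ω) ^ 2 := by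
        intro ω; rw [Real.norm_eq_abs, sq_abs]
        exact congrArg (· ^ 2) (Finset.sum_congr rfl fun n _ => by rw [smul_eq_mul, mul_comm])
      simp_rw [h2]
      exact rad_sum_sq hr _
    rw [hLeq]
    calc Real.sqrt (∑ n : Fin N, (T' n (x n)) ^ 2) ≤ Real.sqrt (C ^ 2 * I) :=
        Real.sqrt_le_sqrt hmain
      _ = C * Real.sqrt I := by rw [Real.sqrt_mul (sq_nonneg C), Real.sqrt_sq hC]

end
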